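/- Let 𝓑 be a directed family with U ∈ 𝓑 such that every swiss cheese has uniquely determined wheel and (pairwise disjoint) holes. Then 𝓑 is unpackable: no ball is a finite union of proper sub-balls. -/

import Mathlib

variable {U : Type*}

/-- A directed family: nonempty sets, any two nested or disjoint. -/
def DirFam (𝓑 : Set (Set U)) : Prop :=
  (∀ B ∈ 𝓑, B.Nonempty) ∧
    ∀ B₀ ∈ 𝓑, ∀ B₁ ∈ 𝓑, B₀ ⊆ B₁ ∨ B₁ ⊆ B₀ ∨ B₀ ∩ B₁ = ∅

/-- Unpackable: no ball is a finite union of proper sub-balls. -/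
def Unpackable (𝓑 : Set (Set U)) : Prop :=
  ∀ A ∈ 𝓑, ∀ H : Set (Set U), H.Finite → H ⊆ 𝓑 → (∀ B ∈ H, B ⊂ A) → A ≠ ⋃₀ H

/-- If every swiss cheese (with pairwise disjoint holes) has uniquely determined wheel
and holes, then the family is unpackable. -/
theorem stmt8 (𝓑 : Set (Set U)) (h : DirFam 𝓑) (hU : (Set.univ : Set U) ∈ 𝓑)
    (huniq : ∀ A₁ ∈ 𝓑, ∀ A₂ ∈ 𝓑, ∀ H₁ H₂ : Set (Set U),
      H₁.Finite → H₂.Finite → H₁ ⊆ 𝓑 → H₂ ⊆ 𝓑 →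
      (∀ B ∈ H₁, B ⊂ A₁) → (∀ B ∈ H₂, B ⊂ A₂) →
      (∀ B ∈ H₁, ∀ C ∈ H₁, B ≠ C → B ∩ C = ∅) →
      (∀ B ∈ H₂, ∀ C ∈ H₂, B ≠ C → B ∩ C = ∅) →
      A₁ \ ⋃₀ H₁ = A₂ \ ⋃₀ H₂ → A₁ = A₂ ∧ H₁ = H₂) :
    Unpackable 𝓑 := by
  rintro A hA H hHfin hH𝓑 hHsub hEq
  obtain ⟨hne, hdir⟩ := h
  set H' : Set (Set U) := {B ∈ H | ∀ C ∈ H, B ⊆ C → B = C} with hH'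
  have hH'sub : H' ⊆ H := fun B hB => hB.1
  have hcover : ∀ B ∈ H, ∃ C ∈ H', B ⊆ C := by
    intro B hB
    obtain ⟨C, hC, hmax0⟩ := Set.Finite.exists_maximalFor id {C ∈ H | B ⊆ C}
      (hHfin.subset (fun x hx => hx.1)) ⟨B, hB, subset_rfl⟩
    have hmax : ∀ D ∈ {C ∈ H | B ⊆ C}, C ⊆ D → C = D :=
      fun D hD hCD => subset_antisymm hCD (hmax0 hD hCD)
    exact ⟨C, ⟨hC.1, fun D hD hCD => hmax D ⟨hD, hC.2.trans hCD⟩ hCD⟩, hC.2⟩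
  have hUnion : ⋃₀ H' = A := by
    rw [hEq]
    apply subset_antisymm (Set.sUnion_mono hH'sub)
    rintro x ⟨B, hB, hxB⟩
    obtain ⟨C, hC, hBC⟩ := hcover B hB
    exact ⟨C, hC, hBC hxB⟩
  have hdisj : ∀ B ∈ H', ∀ C ∈ H', B ≠ C → B ∩ C = ∅ := by
    intro B hB C hC hne'
    rcases hdir B (hH𝓑 hB.1) C (hH𝓑 hC.1) with h1 | h1 | h1
    · exact absurd (hB.2 C hC.1 h1) hne'
    · exact absurd (hC.2 B hB.1 h1).symm hne'
    · exact h1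
  obtain ⟨x, hx⟩ := hne A hA
  obtain ⟨B₀, hB₀, hxB₀⟩ : x ∈ ⋃₀ H' := hUnion ▸ hx
  have hB₀𝓑 : B₀ ∈ 𝓑 := hH𝓑 (hH'sub hB₀)
  have hkey : A \ ⋃₀ (H' \ {B₀}) = B₀ \ ⋃₀ (∅ : Set (Set U)) := by
    simp only [Set.sUnion_empty, Set.diff_empty]
    apply Set.Subset.antisymm
    · rintro y ⟨hyA, hyn⟩
      obtain ⟨C, hC, hyC⟩ : y ∈ ⋃₀ H' := hUnion ▸ hyA
      by_cases hCB : C = B₀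
      · exact hCB ▸ hyC
      · exact absurd ⟨C, ⟨hC, hCB⟩, hyC⟩ hyn
    · intro y hy
      refine ⟨hUnion ▸ ⟨B₀, hB₀, hy⟩, ?_⟩
      rintro ⟨C, ⟨hC, hCB⟩, hyC⟩
      have hd := hdisj B₀ hB₀ C hC (fun e => hCB e.symm)
      exact absurd (Set.mem_inter hy hyC) (by rw [hd]; exact Set.notMem_empty y)
  have hres := huniq A hA B₀ hB₀𝓑 (H' \ {B₀}) ∅
    ((hHfin.subset hH'sub).subset Set.diff_subset) Set.finite_empty
    (fun B hB => hH𝓑 (hH'sub hB.1)) (Set.empty_subset _)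
    (fun B hB => hHsub B (hH'sub hB.1)) (fun B hB => absurd hB (Set.notMem_empty B))
    (fun B hB C hC => hdisj B hB.1 C hC.1)
    (fun B hB => absurd hB (Set.notMem_empty B))
    hkey
  exact absurd hres.1 (hHsub B₀ (hH'sub hB₀)).ne'
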